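/- In the clique-interdiction flow construction: if there is a set R ⊆ V with |R| ≤ r such that R ∩ C ≠ ∅ for every clique C ∈ 𝒞_ℓ(G), then X* ≠ ∅, i.e., there exists an integral s-t path flow of value θ = n+ℓ with λ(x,S) ≤ k−1 for all S ∈ S_{H,k}. -/

import Mathlib

open scoped BigOperators

/-- A directed multigraph: arcs `A` with tail and head maps into a vertex type `V`. -/
structure MultiDigraph (V : Type) (A : Type) where
  tail : A → V
  head : A → V

namespace MultiDigraph

variable {V A : Type}

/-- `p` is (the arc list of) a simple directed `s`-`t`-path in `D`. -/
def IsPath (D : MultiDigraph V A) (s t : V) (p : List A) : Prop :=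
  p ≠ [] ∧ List.Chain' (fun a b => D.head a = D.tail b) p ∧
    (p.map D.tail).head? = some s ∧ (p.map D.head).getLast? = some t ∧
    (p.map D.tail ++ [t]).Nodup

/-- The set of simple `s`-`t`-paths of `D`. -/
def pathSet (D : MultiDigraph V A) (s t : V) : Set (List A) := {p | D.IsPath s t p}

/-- `x` is a feasible `s`-`t` path flow with respect to capacities `u`. -/
def IsFlow (D : MultiDigraph V A) (s t : V) (u : A → ℚ) (x : List A → ℚ) : Prop :=
  (∀ p, 0 ≤ x p) ∧ (∀ p, x p ≠ 0 → D.IsPath s t p) ∧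
    ∀ a : A, (∑ᶠ p ∈ {p : List A | D.IsPath s t p ∧ a ∈ p}, x p) ≤ u a

/-- The value of a path flow. -/
noncomputable def value (D : MultiDigraph V A) (s t : V) (x : List A → ℚ) : ℚ :=
  ∑ᶠ p ∈ D.pathSet s t, x p

/-- `λ(x,S)`: the amount of flow on paths meeting `S`. -/
noncomputable def loss (D : MultiDigraph V A) (s t : V) (x : List A → ℚ) (S : Set A) : ℚ :=
  ∑ᶠ p ∈ {p : List A | D.IsPath s t p ∧ ∃ a ∈ S, a ∈ p}, x p

/-- The amount of flow surviving the failure of `S`. -/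
noncomputable def survival (D : MultiDigraph V A) (s t : V) (x : List A → ℚ) (S : Set A) : ℚ :=
  ∑ᶠ p ∈ {p : List A | D.IsPath s t p ∧ ∀ a ∈ S, a ∉ p}, x p

/-- A feasible multicommodity path flow meeting all demands exactly. -/
def IsMultiFlow {K : Type} (D : MultiDigraph V A) (u : A → ℚ)
    (src snk : K → V) (dem : K → ℚ) (x : K → List A → ℚ) : Prop :=
  (∀ i p, 0 ≤ x i p) ∧ (∀ i p, x i p ≠ 0 → D.IsPath (src i) (snk i) p) ∧
    (∀ a : A,
      (∑ᶠ i : K, ∑ᶠ p ∈ {p : List A | D.IsPath (src i) (snk i) p ∧ a ∈ p}, x i p) ≤ u a) ∧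
    (∀ i : K, (∑ᶠ p ∈ D.pathSet (src i) (snk i), x i p) = dem i)

/-- `λ(x,S)` for a multicommodity flow. -/
noncomputable def multiLoss {K : Type} (D : MultiDigraph V A)
    (src snk : K → V) (x : K → List A → ℚ) (S : Set A) : ℚ :=
  ∑ᶠ i : K, ∑ᶠ p ∈ {p : List A | D.IsPath (src i) (snk i) p ∧ ∃ a ∈ S, a ∈ p}, x i p

end MultiDigraph

/-- `S` is a legal failure scenario for compatibility graph `H` and budget `k`:
a clique of `H` of cardinality at most `k`. -/
def cliqueScenario {A : Type} (H : SimpleGraph A) (k : ℕ) (S : Set A) : Prop :=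
  S.Finite ∧ S.ncard ≤ k ∧ H.IsClique S

section CliqueInterdiction

/-- Nodes of the clique-interdiction flow construction. -/
inductive CNode (n : ℕ) : Type
  | s | s0 | s1 | t0 | t1 | t
  | v (i : Fin (n + 1))
  | y (i : Fin n) (b : Bool)
  | z (i : Fin n) (b : Bool)

/-- Arcs of the clique-interdiction flow construction (all of capacity 1);
`b = false` stands for superscript `0` and `b = true` for superscript `1`;
the bundle `A_{st}` has `k − 2 = ℓ − 1` arcs. -/
inductive CArc (n r ℓ : ℕ) : Type
  | as                          -- a_s = (s, v_1)
  | at'                         -- a_t = (v_{n+1}, t)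
  | vy (i : Fin n) (b : Bool)   -- (v_i, y_i^b)
  | yz (i : Fin n) (b : Bool)   -- a^b_{v_i} = (y_i^b, z_i^b)
  | zv (i : Fin n) (b : Bool)   -- (z_i^b, v_{i+1})
  | as0 (j : Fin r)             -- bundle A_s⁰: (s, s⁰)
  | at0 (j : Fin r)             -- bundle A_t⁰: (t⁰, t)
  | s0y (i : Fin n)             -- (s⁰, y_i⁰)
  | zt0 (i : Fin n)             -- (z_i⁰, t⁰)
  | as1 (j : Fin (n - r))       -- bundle A_s¹: (s, s¹)
  | at1 (j : Fin (n - r))       -- bundle A_t¹: (t¹, t)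
  | s1y (i : Fin n)             -- (s¹, y_i¹)
  | zt1 (i : Fin n)             -- (z_i¹, t¹)
  | ast (j : Fin (ℓ - 1))       -- bundle A_{st}: (s, t)

variable (n r ℓ : ℕ)

/-- The digraph of the clique-interdiction flow construction. -/
def cD : MultiDigraph (CNode n) (CArc n r ℓ) where
  tail a :=
    match a with
    | .as => .s
    | .at' => .v (Fin.last n)
    | .vy i _ => .v i.castSucc
    | .yz i b => .y i b
    | .zv i b => .z i b
    | .as0 _ => .s
    | .at0 _ => .t0
    | .s0y _ => .s0
    | .zt0 i => .z i false
    | .as1 _ => .s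
    | .at1 _ => .t1
    | .s1y _ => .s1
    | .zt1 i => .z i true
    | .ast _ => .s
  head a :=
    match a with
    | .as => .v 0
    | .at' => .t
    | .vy i b => .y i b
    | .yz i b => .z i b
    | .zv i _ => .v i.succ
    | .as0 _ => .s0
    | .at0 _ => .t
    | .s0y i => .y i false
    | .zt0 _ => .t0
    | .as1 _ => .s1
    | .at1 _ => .t
    | .s1y i => .y i true
    | .zt1 _ => .t1
    | .ast _ => .t

/-- The set `S̄ := A_{st} ∪ {a_s, a_t}`. -/
def inSbar : CArc n r ℓ → Prop
  | .as => True
  | .at' => True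
  | .ast _ => True
  | _ => False

/-- The compatibility graph of the clique-interdiction flow construction:
`{a_v¹, a_w¹}` for every edge `{v,w}` of `G`, `{a_s, a_v¹}` for every vertex `v`,
and all 2-element subsets of `S̄`. -/
def cH (G : SimpleGraph (Fin n)) : SimpleGraph (CArc n r ℓ) :=
  SimpleGraph.fromRel (fun x y =>
    (∃ i j : Fin n, G.Adj i j ∧ x = CArc.yz i true ∧ y = CArc.yz j true) ∨
    (∃ i : Fin n, x = CArc.as ∧ y = CArc.yz i true) ∨
    (inSbar n r ℓ x ∧ inSbar n r ℓ y))

/-- Membership in `X*`: an integral `s`-`t` path flow of value `θ = n + ℓ` (unit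
capacities) with `λ(x,S) ≤ k − 1 = ℓ` for every clique scenario `S ∈ S_{H,k}`,
`k = ℓ + 1`. -/
def memXstar (G : SimpleGraph (Fin n)) (x : List (CArc n r ℓ) → ℚ) : Prop :=
  (cD n r ℓ).IsFlow CNode.s CNode.t (fun _ => 1) x ∧
  (∀ p, ∃ zp : ℤ, x p = (zp : ℚ)) ∧
  (cD n r ℓ).value CNode.s CNode.t x = (n : ℚ) + (ℓ : ℚ) ∧
  (∀ S : Set (CArc n r ℓ), cliqueScenario (cH n r ℓ G) (ℓ + 1) S →
    (cD n r ℓ).loss CNode.s CNode.t x S ≤ (ℓ : ℚ))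

end CliqueInterdiction

namespace CIproof

variable (n r ℓ : ℕ)

/-- The triple of arcs of the main chain at position `i`. -/
def tripleL (b : Fin n → Bool) (i : Fin n) : List (CArc n r ℓ) :=
  [CArc.vy i (b i), CArc.yz i (b i), CArc.zv i (b i)]

/-- The first `m` triples of the main chain. -/
def seg (b : Fin n → Bool) : ℕ → List (CArc n r ℓ)
  | 0 => []
  | m+1 => seg b m ++ (if h : m < n then tripleL n r ℓ b ⟨m, h⟩ else [])

/-- The main path. -/
def mainP (b : Fin n → Bool) : List (CArc n r ℓ) :=
  CArc.as :: (seg n r ℓ b n ++ [CArc.at'])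

theorem mem_seg {b : Fin n → Bool} {m : ℕ} {a : CArc n r ℓ}
    (ha : a ∈ seg n r ℓ b m) :
    ∃ i : Fin n, a = CArc.vy i (b i) ∨ a = CArc.yz i (b i) ∨ a = CArc.zv i (b i) := by
  induction m with
  | zero => simp [seg] at ha
  | succ m ih =>
    rw [seg] at ha
    rcases List.mem_append.mp ha with h | h
    · exact ih h
    · split at h
      · exact ⟨_, by simpa [tripleL] using h⟩
      · simp at h

theorem mem_mainP {b : Fin n → Bool} {a : CArc n r ℓ} (ha : a ∈ mainP n r ℓ b) :
    a = CArc.as ∨ a = CArc.at' ∨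
      ∃ i : Fin n, a = CArc.vy i (b i) ∨ a = CArc.yz i (b i) ∨ a = CArc.zv i (b i) := by
  rw [mainP, List.mem_cons] at ha
  rcases ha with rfl | ha
  · exact Or.inl rfl
  · rcases List.mem_append.mp ha with h | h
    · exact Or.inr (Or.inr (mem_seg n r ℓ h))
    · simp at h; exact Or.inr (Or.inl h)

theorem seg_chain {b : Fin n → Bool} {m : ℕ} (hm : m ≤ n) :
    List.Chain' (fun a c => (cD n r ℓ).head a = (cD n r ℓ).tail c)
        (CArc.as :: seg n r ℓ b m) ∧
      ((CArc.as :: seg n r ℓ b m).map (cD n r ℓ).head).getLast?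
        = some (CNode.v ⟨m, Nat.lt_succ_of_le hm⟩) := by
  induction m with
  | zero =>
    refine ⟨List.isChain_singleton _, ?_⟩
    simp [seg, cD]
  | succ m ih =>
    have hm' : m ≤ n := Nat.le_of_succ_le hm
    have hlt : m < n := hm
    obtain ⟨ihc, ihl⟩ := ih hm'
    have hsplit : (CArc.as :: seg n r ℓ b (m+1) : List (CArc n r ℓ))
        = (CArc.as :: seg n r ℓ b m) ++ tripleL n r ℓ b ⟨m, hlt⟩ := by
      simp [seg, dif_pos hlt]
    constructor
    · rw [hsplit]
      refine List.isChain_append.mpr ⟨ihc, ?_, ?_⟩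
      · simp [tripleL, cD, List.isChain_cons_cons]
      · intro x hx y hy
        simp [tripleL] at hy
        subst hy
        have := ihl
        rw [List.getLast?_map] at this
        rw [hx] at this
        simp at this
        rw [this]
        simp [cD]
    · rw [hsplit, List.map_append]
      have : ((tripleL n r ℓ b ⟨m, hlt⟩).map (cD n r ℓ).head)
          = [CNode.y ⟨m, hlt⟩ (b ⟨m, hlt⟩), CNode.z ⟨m, hlt⟩ (b ⟨m, hlt⟩),
             CNode.v ⟨m+1, Nat.lt_succ_of_le hm⟩] := by
        simp [tripleL, cD]
      rw [this, show ∀ (L : List (CNode n)) x y z', L ++ [x,y,z'] = (L ++ [x,y]) ++ [z'] by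
        intro L x y z'; simp]
      rw [List.getLast?_concat]

theorem mem_seg_tail {b : Fin n → Bool} {m : ℕ} {x : CNode n}
    (hx : x ∈ (seg n r ℓ b m).map (cD n r ℓ).tail) :
    (∃ j : Fin (n+1), j.1 < m ∧ x = CNode.v j) ∨
      (∃ (i : Fin n) (c : Bool), i.1 < m ∧ (x = CNode.y i c ∨ x = CNode.z i c)) := by
  induction m with
  | zero => simp [seg] at hx
  | succ m ih =>
    rw [seg, List.map_append] at hx
    rcases List.mem_append.mp hx with h | h
    · rcases ih h with ⟨j, hj, rfl⟩ | ⟨i, c, hi, hc⟩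
      · exact Or.inl ⟨j, Nat.lt_succ_of_lt hj, rfl⟩
      · exact Or.inr ⟨i, c, Nat.lt_succ_of_lt hi, hc⟩
    · split at h
      · simp [tripleL, cD] at h
        rcases h with rfl | rfl | rfl
        · exact Or.inl ⟨_, by simp [Fin.castSucc], rfl⟩
        · exact Or.inr ⟨_, _, by simp, Or.inl rfl⟩
        · exact Or.inr ⟨_, _, by simp, Or.inr rfl⟩
      · simp at h

theorem seg_tail_nodup {b : Fin n → Bool} {m : ℕ} :
    ((seg n r ℓ b m).map (cD n r ℓ).tail).Nodup := by
  induction m with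
  | zero => simp [seg]
  | succ m ih =>
    rw [seg, List.map_append]
    refine List.Nodup.append ih ?_ ?_
    · split
      · simp [tripleL, cD]
      · simp
    · intro x hx hx'
      split at hx'
      · simp [tripleL, cD] at hx'
        rcases mem_seg_tail n r ℓ hx with ⟨j, hj, rfl⟩ | ⟨i, c, hi, hc⟩
        · rcases hx' with h | h | h
          · rw [CNode.v.injEq] at h
            subst h
            simp [Fin.castSucc, Fin.castAdd, Fin.castLE] at hj
          · exact nomatch h
          · exact nomatch h
        · rcases hc with rfl | rfl
          · rcases hx' with h | h | h
            · exact nomatch h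
            · simp at h
              obtain ⟨rfl, -⟩ := h
              simp at hi
            · exact nomatch h
          · rcases hx' with h | h | h
            · exact nomatch h
            · exact nomatch h
            · simp at h
              obtain ⟨rfl, -⟩ := h
              simp at hi
      · simp at hx'

theorem mainP_isPath (b : Fin n → Bool) :
    (cD n r ℓ).IsPath CNode.s CNode.t (mainP n r ℓ b) := by
  obtain ⟨hc, hl⟩ := seg_chain n r ℓ (b := b) (le_refl n)
  refine ⟨by simp [mainP], ?_, ?_, ?_, ?_⟩
  · rw [mainP, show (CArc.as :: (seg n r ℓ b n ++ [CArc.at'] ) : List (CArc n r ℓ))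
      = (CArc.as :: seg n r ℓ b n) ++ [CArc.at'] from rfl]
    refine List.isChain_append.mpr ⟨hc, List.isChain_singleton _, ?_⟩
    intro x hx y hy
    simp at hy
    subst hy
    have := hl
    rw [List.getLast?_map, hx] at this
    simp at this
    rw [this]
    simp [cD]
    rfl
  · simp [mainP, cD]
  · rw [mainP, show (CArc.as :: (seg n r ℓ b n ++ [CArc.at'] ) : List (CArc n r ℓ))
      = (CArc.as :: seg n r ℓ b n) ++ [CArc.at'] from rfl, List.map_append,
      show (List.map (cD n r ℓ).head [CArc.at']) = [CNode.t] from rfl, List.getLast?_concat]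
  · rw [mainP]
    have hmt : (CArc.as :: (seg n r ℓ b n ++ [CArc.at'] ) : List (CArc n r ℓ)).map (cD n r ℓ).tail
        = CNode.s :: ((seg n r ℓ b n).map (cD n r ℓ).tail ++ [CNode.v (Fin.last n)]) := by
      simp [cD]
    rw [hmt]
    rw [show (CNode.s :: ((seg n r ℓ b n).map (cD n r ℓ).tail ++ [CNode.v (Fin.last n)])
        ++ [CNode.t] : List (CNode n))
      = CNode.s :: ((seg n r ℓ b n).map (cD n r ℓ).tail ++ [CNode.v (Fin.last n), CNode.t])
        by simp]
    rw [List.nodup_cons]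
    constructor
    · intro hmem
      rcases List.mem_append.mp hmem with h | h
      · rcases mem_seg_tail n r ℓ h with ⟨j, hj, hv⟩ | ⟨i, c, hi, hc'⟩
        · exact nomatch hv
        · rcases hc' with h' | h' <;> exact nomatch h'
      · simp at h
    · refine List.Nodup.append (seg_tail_nodup n r ℓ) (by simp) ?_
      intro x hx hx'
      rcases mem_seg_tail n r ℓ hx with ⟨j, hj, rfl⟩ | ⟨i, c, hi, hc'⟩
      · simp at hx'
        subst hx'
        simp [Fin.last] at hj
      · rcases hc' with rfl | rfl <;> simp at hx'

/-- A side path. -/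
def sideP (R' : Finset (Fin n)) (σ₀ : {i : Fin n // i ∈ R'} → Fin r)
    (σ₁ : {i : Fin n // i ∉ R'} → Fin (n - r)) (i : Fin n) : List (CArc n r ℓ) :=
  if h : i ∈ R' then
    [CArc.as0 (σ₀ ⟨i, h⟩), CArc.s0y i, CArc.yz i false, CArc.zt0 i, CArc.at0 (σ₀ ⟨i, h⟩)]
  else
    [CArc.as1 (σ₁ ⟨i, h⟩), CArc.s1y i, CArc.yz i true, CArc.zt1 i, CArc.at1 (σ₁ ⟨i, h⟩)]

theorem sideP_isPath (R' : Finset (Fin n)) (σ₀ : {i : Fin n // i ∈ R'} → Fin r)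
    (σ₁ : {i : Fin n // i ∉ R'} → Fin (n - r)) (i : Fin n) :
    (cD n r ℓ).IsPath CNode.s CNode.t (sideP n r ℓ R' σ₀ σ₁ i) := by
  by_cases h : i ∈ R' <;>
    refine ⟨?_, ?_, ?_, ?_, ?_⟩ <;>
    simp [sideP, h, cD, List.Chain', List.isChain_cons_cons]

/-- An `A_{st}` path. -/
def astP (j : Fin (ℓ - 1)) : List (CArc n r ℓ) := [CArc.ast j]

theorem astP_isPath (j : Fin (ℓ - 1)) :
    (cD n r ℓ).IsPath CNode.s CNode.t (astP n r ℓ j) := by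
  refine ⟨?_, ?_, ?_, ?_, ?_⟩ <;> simp [astP, cD, List.Chain', List.isChain_singleton]

theorem sum_ite_le_one {ι : Type} [Fintype ι] (Q : ι → Prop) [DecidablePred Q]
    (h : ∀ i j, Q i → Q j → i = j) :
    (∑ i, if Q i then (1 : ℚ) else 0) ≤ 1 := by
  classical
  rw [Finset.sum_boole]
  have hc : (Finset.univ.filter Q).card ≤ 1 :=
    Finset.card_le_one.mpr fun a ha b hb =>
      h a b (Finset.mem_filter.mp ha).2 (Finset.mem_filter.mp hb).2
  exact_mod_cast hc

theorem finsum_mem_count {α ι : Type} [Fintype ι] [DecidableEq α] (P : ι → α)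
    (T : Set α) [DecidablePred (· ∈ T)] :
    (∑ᶠ p ∈ T, ∑ i : ι, if P i = p then (1 : ℚ) else 0)
      = ∑ i : ι, if P i ∈ T then (1 : ℚ) else 0 := by
  classical
  rw [finsum_mem_def]
  have hs : Function.support
      (Set.indicator T fun p => ∑ i : ι, if P i = p then (1 : ℚ) else 0)
        ⊆ ↑(Finset.image P Finset.univ) := by
    intro p hp
    rw [Function.mem_support] at hp
    by_contra hmem
    apply hp
    have h0 : (∑ i : ι, if P i = p then (1 : ℚ) else 0) = 0 := by
      refine Finset.sum_eq_zero fun i _ => ?_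
      rw [if_neg]
      intro he
      exact hmem (Finset.mem_coe.mpr (Finset.mem_image.mpr ⟨i, Finset.mem_univ i, he⟩))
    rw [Set.indicator_apply]
    split_ifs <;> simp [h0]
  rw [finsum_eq_sum_of_support_subset _ hs]
  have hcongr : ∀ p ∈ Finset.image P Finset.univ,
      Set.indicator T (fun p => ∑ i : ι, if P i = p then (1 : ℚ) else 0) p
        = ∑ i : ι, if P i = p then (if P i ∈ T then (1 : ℚ) else 0) else 0 := by
    intro p _
    rw [Set.indicator_apply]
    split_ifs with hT
    · refine Finset.sum_congr rfl fun i _ => ?_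
      by_cases he : P i = p
      · rw [if_pos he, if_pos he, if_pos (he ▸ hT)]
      · rw [if_neg he, if_neg he]
    · symm
      refine Finset.sum_eq_zero fun i _ => ?_
      by_cases he : P i = p
      · rw [if_pos he, if_neg (fun hin => hT (he ▸ hin))]
      · rw [if_neg he]
  rw [Finset.sum_congr rfl hcongr, Finset.sum_comm]
  refine Finset.sum_congr rfl fun i _ => ?_
  rw [Finset.sum_ite_eq, if_pos (Finset.mem_image_of_mem _ (Finset.mem_univ i))]

theorem side_side_disj {R' : Finset (Fin n)} {σ₀ : {i : Fin n // i ∈ R'} → Fin r}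
    {σ₁ : {i : Fin n // i ∉ R'} → Fin (n - r)}
    (h₀ : Function.Injective σ₀) (h₁ : Function.Injective σ₁)
    {i i' : Fin n} {a : CArc n r ℓ}
    (ha : a ∈ sideP n r ℓ R' σ₀ σ₁ i) (ha' : a ∈ sideP n r ℓ R' σ₀ σ₁ i') : i = i' := by
  by_cases hi : i ∈ R' <;> by_cases hi' : i' ∈ R' <;>
      simp only [sideP, hi, hi', dif_pos, dif_neg, not_false_iff, List.mem_cons,
        List.mem_singleton, List.not_mem_nil, or_false] at ha ha' <;>
    rcases ha with rfl | rfl | rfl | rfl | rfl <;> simp at ha' <;>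
    first
      | exact ha'
      | exact ha'.1
      | exact congrArg Subtype.val (h₀ ha')
      | exact congrArg Subtype.val (h₁ ha')

theorem main_side_disj {b : Fin n → Bool} {R' : Finset (Fin n)}
    {σ₀ : {i : Fin n // i ∈ R'} → Fin r} {σ₁ : {i : Fin n // i ∉ R'} → Fin (n - r)}
    (hb : ∀ i, b i = true ↔ i ∈ R') {i : Fin n} {a : CArc n r ℓ}
    (ha : a ∈ mainP n r ℓ b) (ha' : a ∈ sideP n r ℓ R' σ₀ σ₁ i) : False := by
  by_cases hi : i ∈ R' <;>
      simp only [sideP, hi, dif_pos, dif_neg, not_false_iff, List.mem_cons,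
        List.mem_singleton, List.not_mem_nil, or_false] at ha' <;>
    rcases mem_mainP n r ℓ ha with rfl | rfl | ⟨i0, rfl | rfl | rfl⟩ <;> simp at ha'
  · obtain ⟨rfl, hbf⟩ := ha'
    rw [(hb i0).mpr hi] at hbf
    exact Bool.noConfusion hbf
  · obtain ⟨rfl, hbf⟩ := ha'
    exact hi ((hb i0).mp hbf)

theorem main_ast_disj {b : Fin n → Bool} {j : Fin (ℓ - 1)} {a : CArc n r ℓ}
    (ha : a ∈ mainP n r ℓ b) (ha' : a ∈ astP n r ℓ j) : False := by
  simp [astP] at ha'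
  subst ha'
  rcases mem_mainP n r ℓ ha with h | h | ⟨i0, h | h | h⟩ <;> exact nomatch h

theorem side_ast_disj {R' : Finset (Fin n)} {σ₀ : {i : Fin n // i ∈ R'} → Fin r}
    {σ₁ : {i : Fin n // i ∉ R'} → Fin (n - r)} {i : Fin n} {j : Fin (ℓ - 1)}
    {a : CArc n r ℓ} (ha : a ∈ sideP n r ℓ R' σ₀ σ₁ i) (ha' : a ∈ astP n r ℓ j) :
    False := by
  simp [astP] at ha'
  subst ha'
  by_cases hi : i ∈ R' <;> simp [sideP, hi] at ha

theorem ast_ast_disj {j j' : Fin (ℓ - 1)} {a : CArc n r ℓ}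
    (ha : a ∈ astP n r ℓ j) (ha' : a ∈ astP n r ℓ j') : j = j' := by
  simp [astP] at ha ha'
  rw [ha] at ha'
  exact CArc.ast.inj ha'

/-- `T1`: the arcs `a_s` and `a_v¹`. -/
def isT1 (a : CArc n r ℓ) : Prop := a = CArc.as ∨ ∃ i : Fin n, a = CArc.yz i true

theorem adj_structure {G : SimpleGraph (Fin n)} {x y : CArc n r ℓ}
    (h : (cH n r ℓ G).Adj x y) :
    (isT1 n r ℓ x ∧ isT1 n r ℓ y) ∨ (inSbar n r ℓ x ∧ inSbar n r ℓ y) := by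
  rw [cH, SimpleGraph.fromRel_adj] at h
  obtain ⟨-, h | h⟩ := h <;>
    rcases h with ⟨i, j, hij, rfl, rfl⟩ | ⟨i, rfl, rfl⟩ | ⟨h1, h2⟩
  · exact Or.inl ⟨Or.inr ⟨i, rfl⟩, Or.inr ⟨j, rfl⟩⟩
  · exact Or.inl ⟨Or.inl rfl, Or.inr ⟨i, rfl⟩⟩
  · exact Or.inr ⟨h1, h2⟩
  · exact Or.inl ⟨Or.inr ⟨j, rfl⟩, Or.inr ⟨i, rfl⟩⟩
  · exact Or.inl ⟨Or.inr ⟨i, rfl⟩, Or.inl rfl⟩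
  · exact Or.inr ⟨h2, h1⟩

theorem adj_yz {G : SimpleGraph (Fin n)} {i j : Fin n}
    (h : (cH n r ℓ G).Adj (CArc.yz i true) (CArc.yz j true)) : G.Adj i j := by
  rw [cH, SimpleGraph.fromRel_adj] at h
  obtain ⟨-, h | h⟩ := h <;>
    rcases h with ⟨i', j', hij, h1, h2⟩ | ⟨i', h1, h2⟩ | ⟨h1, h2⟩
  · obtain ⟨rfl, -⟩ := CArc.yz.inj h1
    obtain ⟨rfl, -⟩ := CArc.yz.inj h2
    exact hij
  · exact nomatch h1
  · exact h1.elim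
  · obtain ⟨rfl, -⟩ := CArc.yz.inj h1
    obtain ⟨rfl, -⟩ := CArc.yz.inj h2
    exact hij.symm
  · exact nomatch h1
  · exact h1.elim

theorem side_not_sbar {R' : Finset (Fin n)} {σ₀ : {i : Fin n // i ∈ R'} → Fin r}
    {σ₁ : {i : Fin n // i ∉ R'} → Fin (n - r)} {i : Fin n} {a : CArc n r ℓ}
    (ha : a ∈ sideP n r ℓ R' σ₀ σ₁ i) (hsb : inSbar n r ℓ a) : False := by
  by_cases hi : i ∈ R' <;> simp [sideP, hi] at ha <;>
    rcases ha with rfl | rfl | rfl | rfl | rfl <;> exact hsb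

theorem side_T1 {R' : Finset (Fin n)} {σ₀ : {i : Fin n // i ∈ R'} → Fin r}
    {σ₁ : {i : Fin n // i ∉ R'} → Fin (n - r)} {i : Fin n} {a : CArc n r ℓ}
    (ha : a ∈ sideP n r ℓ R' σ₀ σ₁ i) (ht : isT1 n r ℓ a) :
    a = CArc.yz i true ∧ i ∉ R' := by
  by_cases hi : i ∈ R' <;> simp [sideP, hi] at ha <;>
      rcases ht with rfl | ⟨i', rfl⟩ <;>
    simp at ha
  exact ⟨by rw [ha], hi⟩
end CIproof

/-- In the clique-interdiction flow construction: if some set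
`R ⊆ V` with `|R| ≤ r` intersects every clique of `G` of size `ℓ`, then `X* ≠ ∅`,
i.e. there is an integral `s`-`t` path flow of value `θ = n + ℓ` (unit capacities)
with `λ(x,S) ≤ k − 1 = ℓ` for every clique scenario `S ∈ S_{H,k}`, `k = ℓ + 1`. -/
theorem cliqueInterdiction_flow_exists
    (n r ℓ : ℕ) (hℓ : 1 ≤ ℓ) (hr : r ≤ n) (G : SimpleGraph (Fin n))
    (R : Finset (Fin n)) (hR : R.card ≤ r)
    (hhit : ∀ C : Finset (Fin n), G.IsClique (C : Set (Fin n)) → C.card = ℓ →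
      ∃ v ∈ C, v ∈ R) :
    ∃ x : List (CArc n r ℓ) → ℚ, memXstar n r ℓ G x := by
  classical
  obtain ⟨R', hRR', hcard⟩ := Finset.exists_superset_card_eq hR (by simpa using hr)
  set b : Fin n → Bool := fun i => decide (i ∈ R') with hbdef
  have hb : ∀ i, b i = true ↔ i ∈ R' := fun i => by simp [hbdef]
  have hcardc : R'ᶜ.card = n - r := by
    rw [Finset.card_compl, hcard]
    simp
  let e₀ : {i : Fin n // i ∈ R'} ≃ Fin r := Finset.equivFinOfCardEq hcard
  let e₁ : {i : Fin n // i ∈ R'ᶜ} ≃ Fin (n - r) := Finset.equivFinOfCardEq hcardc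
  let σ₀ : {i : Fin n // i ∈ R'} → Fin r := fun x => e₀ x
  let σ₁ : {i : Fin n // i ∉ R'} → Fin (n - r) :=
    fun x => e₁ ⟨x.1, Finset.mem_compl.mpr x.2⟩
  have h₀ : Function.Injective σ₀ := fun x y h => e₀.injective h
  have h₁ : Function.Injective σ₁ := by
    intro x y h
    have h2 := e₁.injective h
    exact Subtype.ext (Subtype.mk_eq_mk.mp h2)
  let P : Unit ⊕ Fin n ⊕ Fin (ℓ - 1) → List (CArc n r ℓ) :=
    Sum.elim (fun _ => CIproof.mainP n r ℓ b)
      (Sum.elim (CIproof.sideP n r ℓ R' σ₀ σ₁) (CIproof.astP n r ℓ))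
  have hPmain : P (Sum.inl ()) = CIproof.mainP n r ℓ b := rfl
  have hPside : ∀ i, P (Sum.inr (Sum.inl i)) = CIproof.sideP n r ℓ R' σ₀ σ₁ i :=
    fun _ => rfl
  have hPast : ∀ j, P (Sum.inr (Sum.inr j)) = CIproof.astP n r ℓ j := fun _ => rfl
  have hPpath : ∀ i, (cD n r ℓ).IsPath CNode.s CNode.t (P i) := by
    rintro (⟨⟩ | i | j)
    · exact CIproof.mainP_isPath n r ℓ b
    · exact CIproof.sideP_isPath n r ℓ R' σ₀ σ₁ i
    · exact CIproof.astP_isPath n r ℓ j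
  have huniq : ∀ (a : CArc n r ℓ) (i j : Unit ⊕ Fin n ⊕ Fin (ℓ - 1)),
      a ∈ P i → a ∈ P j → i = j := by
    rintro a (⟨⟩ | i | i) (⟨⟩ | i' | i') ha ha'
    · rfl
    · exact (CIproof.main_side_disj n r ℓ hb ha ha').elim
    · exact (CIproof.main_ast_disj n r ℓ ha ha').elim
    · exact (CIproof.main_side_disj n r ℓ hb ha' ha).elim
    · exact congrArg (fun i => Sum.inr (Sum.inl i))
        (CIproof.side_side_disj n r ℓ h₀ h₁ ha ha')
    · exact (CIproof.side_ast_disj n r ℓ ha ha').elim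
    · exact (CIproof.main_ast_disj n r ℓ ha' ha).elim
    · exact (CIproof.side_ast_disj n r ℓ ha' ha).elim
    · exact congrArg (fun j => Sum.inr (Sum.inr j)) (CIproof.ast_ast_disj n r ℓ ha ha')
  refine ⟨fun p => ∑ i : Unit ⊕ Fin n ⊕ Fin (ℓ - 1), if P i = p then (1 : ℚ) else 0,
    ⟨?_, ?_, ?_⟩, ?_, ?_, ?_⟩
  · -- nonnegativity
    intro p
    refine Finset.sum_nonneg fun i _ => ?_
    split_ifs <;> norm_num
  · -- support consists of paths
    intro p hp
    have hex : ∃ i, P i = p := by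
      by_contra hno
      push_neg at hno
      exact hp (Finset.sum_eq_zero fun i _ => if_neg (hno i))
    obtain ⟨i, rfl⟩ := hex
    exact hPpath i
  · -- capacity
    intro a
    rw [CIproof.finsum_mem_count]
    refine le_trans (CIproof.sum_ite_le_one _ ?_) le_rfl
    intro i j hi hj
    exact huniq a i j hi.2 hj.2
  · -- integrality
    intro p
    refine ⟨((Finset.univ.filter fun i => P i = p).card : ℤ), ?_⟩
    show (∑ i : Unit ⊕ Fin n ⊕ Fin (ℓ - 1), if P i = p then (1 : ℚ) else 0)
      = (((Finset.univ.filter fun i => P i = p).card : ℤ) : ℚ)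
    rw [Finset.sum_boole]
    push_cast
    ring
  · -- value
    rw [MultiDigraph.value, CIproof.finsum_mem_count]
    rw [Finset.sum_congr rfl fun i _ => if_pos
      (show P i ∈ (cD n r ℓ).pathSet CNode.s CNode.t from hPpath i)]
    rw [Finset.sum_const, Finset.card_univ, nsmul_eq_mul, mul_one]
    simp only [Fintype.card_sum, Fintype.card_unit, Fintype.card_fin]
    push_cast [Nat.cast_sub hℓ]
    ring
  · -- loss
    intro S hS
    obtain ⟨hfin, hcardS, hclq⟩ := hS
    rw [MultiDigraph.loss, CIproof.finsum_mem_count]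
    set T : Set (List (CArc n r ℓ)) :=
      {p | (cD n r ℓ).IsPath CNode.s CNode.t p ∧ ∃ a ∈ S, a ∈ p} with hTdef
    have hmeet : ∀ i, P i ∈ T → ∃ a ∈ S, a ∈ P i := fun i hi => hi.2
    have hone : (1 : ℚ) ≤ (ℓ : ℚ) := by exact_mod_cast hℓ
    by_cases hT1 : ∀ a ∈ S, CIproof.isT1 n r ℓ a
    · -- S consists of a_s and a_v¹ arcs
      set C : Finset (Fin n) := Finset.univ.filter fun i => CArc.yz i true ∈ S with hCdef
      set D : Finset (Fin n) := C \ R' with hDdef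
      have hCS : ∀ i ∈ C, CArc.yz i true ∈ S := fun i hi => (Finset.mem_filter.mp hi).2
      have hclqG : G.IsClique (C : Set (Fin n)) := by
        intro u hu w hw hne
        have h1 := hCS u (by exact_mod_cast hu)
        have h2 := hCS w (by exact_mod_cast hw)
        refine CIproof.adj_yz n r ℓ (hclq h1 h2 ?_)
        intro hcon
        exact hne (CArc.yz.inj hcon).1
      have hCcard : C.card ≤ ℓ + 1 := by
        have hinj : Function.Injective fun i : Fin n => (CArc.yz i true : CArc n r ℓ) :=
          fun u w h => (CArc.yz.inj h).1
        have hsub : C.image (fun i => (CArc.yz i true : CArc n r ℓ)) ⊆ hfin.toFinset := by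
          intro a ha
          obtain ⟨i, hi, rfl⟩ := Finset.mem_image.mp ha
          exact hfin.mem_toFinset.mpr (hCS i hi)
        calc C.card = (C.image fun i => (CArc.yz i true : CArc n r ℓ)).card :=
              (Finset.card_image_of_injective _ hinj).symm
          _ ≤ hfin.toFinset.card := Finset.card_le_card hsub
          _ = S.ncard := (Set.ncard_eq_toFinset_card S hfin).symm
          _ ≤ ℓ + 1 := hcardS
      have hDcard : D.card + 1 ≤ ℓ := by
        rcases Nat.lt_or_ge C.card ℓ with hlt | hge
        · have : D.card ≤ C.card := Finset.card_le_card (Finset.sdiff_subset)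
          omega
        · obtain ⟨C₀, hC₀sub, hC₀card⟩ := Finset.exists_subset_card_eq hge
          obtain ⟨v₁, hv₁C, hv₁R⟩ := hhit C₀
            (hclqG.subset (Finset.coe_subset.mpr hC₀sub)) hC₀card
          have hv₁C' : v₁ ∈ C := hC₀sub hv₁C
          have hv₁R' : v₁ ∈ R' := hRR' hv₁R
          rcases Nat.lt_or_ge C.card (ℓ + 1) with h2 | h2
          · have hsub : D ⊆ C.erase v₁ := by
              intro x hx
              obtain ⟨hxC, hxR⟩ := Finset.mem_sdiff.mp hx
              exact Finset.mem_erase.mpr ⟨fun hxv => hxR (hxv ▸ hv₁R'), hxC⟩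
            have := Finset.card_le_card hsub
            rw [Finset.card_erase_of_mem hv₁C'] at this
            omega
          · have hcc : C.card = ℓ + 1 := le_antisymm hCcard h2
            have herase : (C.erase v₁).card = ℓ := by
              rw [Finset.card_erase_of_mem hv₁C', hcc]
              omega
            obtain ⟨v₂, hv₂C, hv₂R⟩ := hhit (C.erase v₁)
              (hclqG.subset (Finset.coe_subset.mpr (Finset.erase_subset _ _))) herase
            have hv₂R' : v₂ ∈ R' := hRR' hv₂R
            have hsub : D ⊆ (C.erase v₁).erase v₂ := by
              intro x hx
              obtain ⟨hxC, hxR⟩ := Finset.mem_sdiff.mp hx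
              exact Finset.mem_erase.mpr ⟨fun hxv => hxR (hxv ▸ hv₂R'),
                Finset.mem_erase.mpr ⟨fun hxv => hxR (hxv ▸ hv₁R'), hxC⟩⟩
            have := Finset.card_le_card hsub
            rw [Finset.card_erase_of_mem hv₂C, herase] at this
            omega
      rw [Fintype.sum_sum_type, Fintype.sum_sum_type]
      have hmainb : (∑ _x : Unit, if P (Sum.inl _x) ∈ T then (1 : ℚ) else 0) ≤ 1 := by
        rw [Fintype.sum_unique]
        split_ifs <;> norm_num
      have hsideb : (∑ i : Fin n, if P (Sum.inr (Sum.inl i)) ∈ T then (1 : ℚ) else 0)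
          ≤ (D.card : ℚ) := by
        have hterm : ∀ i : Fin n, (if P (Sum.inr (Sum.inl i)) ∈ T then (1 : ℚ) else 0)
            ≤ if i ∈ D then (1 : ℚ) else 0 := by
          intro i
          split_ifs with hm hd hd
          · exact le_rfl
          · exfalso
            obtain ⟨a, haS, hap⟩ := hmeet _ hm
            rw [hPside] at hap
            obtain ⟨rfl, hiR⟩ := CIproof.side_T1 n r ℓ hap (hT1 a haS)
            exact hd (Finset.mem_sdiff.mpr ⟨Finset.mem_filter.mpr ⟨Finset.mem_univ i, haS⟩, hiR⟩)
          · norm_num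
          · exact le_rfl
        calc (∑ i : Fin n, if P (Sum.inr (Sum.inl i)) ∈ T then (1 : ℚ) else 0)
            ≤ ∑ i : Fin n, if i ∈ D then (1 : ℚ) else 0 :=
              Finset.sum_le_sum fun i _ => hterm i
          _ = (D.card : ℚ) := by
              rw [Finset.sum_boole]
              congr 1
              rw [Finset.filter_mem_eq_inter, Finset.univ_inter]
      have hastb : (∑ j : Fin (ℓ - 1), if P (Sum.inr (Sum.inr j)) ∈ T then (1 : ℚ) else 0)
          = 0 := by
        refine Finset.sum_eq_zero fun j _ => ?_
        rw [if_neg]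
        intro hm
        obtain ⟨a, haS, hap⟩ := hmeet _ hm
        rw [hPast] at hap
        simp [CIproof.astP] at hap
        rcases hT1 a haS with rfl | ⟨i, rfl⟩ <;> exact nomatch hap
      have hDq : (D.card : ℚ) + 1 ≤ (ℓ : ℚ) := by exact_mod_cast hDcard
      linarith
    · push_neg at hT1
      obtain ⟨a0, ha0S, ha0T1⟩ := hT1
      by_cases hsb : inSbar n r ℓ a0
      · -- S ⊆ S̄
        have hT2 : ∀ a ∈ S, inSbar n r ℓ a := by
          intro c hc
          by_cases hca : c = a0
          · exact hca ▸ hsb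
          · rcases CIproof.adj_structure n r ℓ (hclq hc ha0S hca) with ⟨-, h2⟩ | ⟨h1, -⟩
            · exact absurd h2 ha0T1
            · exact h1
        rw [Fintype.sum_sum_type, Fintype.sum_sum_type]
        have hmainb : (∑ _x : Unit, if P (Sum.inl _x) ∈ T then (1 : ℚ) else 0) ≤ 1 := by
          rw [Fintype.sum_unique]
          split_ifs <;> norm_num
        have hsideb : (∑ i : Fin n, if P (Sum.inr (Sum.inl i)) ∈ T then (1 : ℚ) else 0)
            = 0 := by
          refine Finset.sum_eq_zero fun i _ => ?_
          rw [if_neg]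
          intro hm
          obtain ⟨a, haS, hap⟩ := hmeet _ hm
          rw [hPside] at hap
          exact CIproof.side_not_sbar n r ℓ hap (hT2 a haS)
        have hastb : (∑ j : Fin (ℓ - 1), if P (Sum.inr (Sum.inr j)) ∈ T then (1 : ℚ) else 0)
            ≤ ((ℓ - 1 : ℕ) : ℚ) := by
          calc (∑ j : Fin (ℓ - 1), if P (Sum.inr (Sum.inr j)) ∈ T then (1 : ℚ) else 0)
              ≤ ∑ _j : Fin (ℓ - 1), (1 : ℚ) :=
                Finset.sum_le_sum fun j _ => by split_ifs <;> norm_num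
            _ = ((ℓ - 1 : ℕ) : ℚ) := by
                rw [Finset.sum_const, Finset.card_univ, Fintype.card_fin, nsmul_eq_mul, mul_one]
        have hcast : ((ℓ - 1 : ℕ) : ℚ) = (ℓ : ℚ) - 1 := by
          push_cast [Nat.cast_sub hℓ]
          ring
        linarith
      · -- S = {a0}
        have hsing : ∀ c ∈ S, c = a0 := by
          intro c hc
          by_contra hca
          rcases CIproof.adj_structure n r ℓ (hclq hc ha0S hca) with ⟨-, h2⟩ | ⟨-, h2⟩
          · exact ha0T1 h2
          · exact hsb h2
        have : (∑ i : Unit ⊕ Fin n ⊕ Fin (ℓ - 1), if P i ∈ T then (1 : ℚ) else 0) ≤ 1 := by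
          refine CIproof.sum_ite_le_one _ ?_
          intro i j hi hj
          obtain ⟨a, haS, hap⟩ := hmeet _ hi
          obtain ⟨a', haS', hap'⟩ := hmeet _ hj
          rw [hsing a haS] at hap
          rw [hsing a' haS'] at hap'
          exact huniq a0 i j hap hap'
        linarith
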